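/- arXiv:2007.07490 — 3 statements merged into one kernel-verified Lean document; each statement's English description precedes it below -/
import Mathlib

section
/- Let G be a group and let H be a normal subgroup of G that is conjugacy stable in G. Then every normal subgroup of H is normal in G (i.e., H is a transitively normal subgroup of G). -/
/-- `H` is conjugacy stable in `G`: any two elements of `H` that are conjugate in `G`
are already conjugate by an element of `H`. -/
def ConjugacyStable {G : Type*} [Group G] (H : Subgroup G) : Prop :=
  ∀ u v : G, u ∈ H → v ∈ H → (∃ g : G, g⁻¹ * u * g = v) → ∃ h ∈ H, h⁻¹ * u * h = v

theorem normal_conjugacyStable_transitively_normal {G : Type*} [Group G]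
    (H : Subgroup G) (hH : H.Normal) (hstab : ConjugacyStable H)
    (N : Subgroup G) (hNH : N ≤ H)
    (hNnormalH : ∀ h ∈ H, ∀ n ∈ N, h⁻¹ * n * h ∈ N) : N.Normal := by
  have key : ∀ n ∈ N, ∀ g : G, g⁻¹ * n * g ∈ N := by
    intro n hn g
    have hnH : n ∈ H := hNH hn
    have hvH : g⁻¹ * n * g ∈ H := by
      have := hH.conj_mem n hnH g⁻¹
      simpa [mul_assoc] using this
    obtain ⟨h, hhH, hh⟩ := hstab n (g⁻¹ * n * g) hnH hvH ⟨g, rfl⟩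
    rw [← hh]
    exact hNnormalH h hhH n hn
  constructor
  intro n hn g
  have := key n hn g⁻¹
  simpa [mul_assoc] using this
end

section
/- Let G be a group and let H ≤ G be a subgroup satisfying the BNTCI property with representatives g₁, …, g_n ∈ G. Then H is conjugacy stable in G if and only if for every i ∈ {1, …, n} and every non-trivial u ∈ g_iHg_i⁻¹ ∩ H, the intersection H ∩ C_G(u)g_i is non-empty. -/
/-- The conjugate subgroup `g H g⁻¹`. -/
def conjSubgroup {G : Type*} [Group G] (g : G) (H : Subgroup G) : Subgroup G :=
  H.map (MulAut.conj g).toMonoidHom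

/-- `H ≤ G` satisfies the BNTCI property with representatives `gᵢ`, `i : Fin n`:
whenever `g⁻¹ H g ∩ H ≠ 1`, the element `g` lies in a double coset `H gᵢ H`. -/
def BNTCI {G : Type*} [Group G] (H : Subgroup G) {n : ℕ} (reps : Fin n → G) : Prop :=
  ∀ g : G, conjSubgroup g⁻¹ H ⊓ H ≠ ⊥ →
    ∃ i : Fin n, ∃ h ∈ H, ∃ f ∈ H, g = h * reps i * f

theorem mem_conjSubgroup_iff {G : Type*} [Group G] (g : G) (H : Subgroup G) (x : G) :
    x ∈ conjSubgroup g H ↔ ∃ y ∈ H, g * y * g⁻¹ = x := by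
  simp [conjSubgroup, Subgroup.mem_map, MulAut.conj]

theorem conjugacyStable_iff_of_BNTCI {G : Type*} [Group G] (H : Subgroup G)
    {n : ℕ} (reps : Fin n → G) (hbntci : BNTCI H reps) :
    ConjugacyStable H ↔
      ∀ i : Fin n, ∀ u : G, u ≠ 1 → u ∈ conjSubgroup (reps i) H ⊓ H →
        ((H : Set G) ∩
          ((fun a => a * reps i) '' (Subgroup.centralizer {u} : Set G))).Nonempty := by
  constructor
  · intro hcs i u hu1 hu
    obtain ⟨hu1', hu2⟩ := hu
    obtain ⟨y, hy, hyu⟩ := (mem_conjSubgroup_iff _ _ _).1 hu1'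
    -- (reps i)⁻¹ * u * reps i = y ∈ H
    have hconj : (reps i)⁻¹ * u * reps i = y := by
      rw [← hyu]; group
    obtain ⟨h, hh, hhc⟩ := hcs u y hu2 hy ⟨reps i, hconj⟩
    refine ⟨h, hh, h * (reps i)⁻¹, ?_, by group⟩
    simp only [SetLike.mem_coe]
    rw [Subgroup.mem_centralizer_iff]
    intro m hm
    rw [Set.mem_singleton_iff] at hm
    rw [hm]
    have : u * h = h * y := by
      rw [← hhc]; group
    calc u * (h * (reps i)⁻¹) = (u * h) * (reps i)⁻¹ := by group
      _ = h * y * (reps i)⁻¹ := by rw [this]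
      _ = h * ((reps i)⁻¹ * u * reps i) * (reps i)⁻¹ := by rw [hconj]
      _ = h * (reps i)⁻¹ * u := by group
  · intro hcond u v hu hv ⟨g, hg⟩
    by_cases hu1 : u = 1
    · exact ⟨1, H.one_mem, by subst hu1; simpa using hg⟩
    have hv1 : v ≠ 1 := by
      intro hv1
      apply hu1
      subst hv1
      have : u = g * 1 * g⁻¹ := by rw [← hg]; group
      simpa using this
    have hne : conjSubgroup g⁻¹ H ⊓ H ≠ ⊥ := by
      intro hb
      apply hv1
      have hvmem : v ∈ conjSubgroup g⁻¹ H ⊓ H := by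
        refine ⟨(mem_conjSubgroup_iff _ _ _).2 ⟨u, hu, ?_⟩, hv⟩
        rw [← hg]; group
      rw [hb] at hvmem
      exact hvmem
    obtain ⟨i, h, hh, f, hf, hgif⟩ := hbntci g hne
    set u' := h⁻¹ * u * h with hu'def
    have hu'H : u' ∈ H := by
      exact H.mul_mem (H.mul_mem (H.inv_mem hh) hu) hh
    have hu'1 : u' ≠ 1 := by
      intro hc
      apply hu1
      have : u = h * u' * h⁻¹ := by rw [hu'def]; group
      rw [hc] at this; simpa using this
    have hkey : (reps i)⁻¹ * u' * reps i = f * v * f⁻¹ := by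
      rw [hu'def, ← hg, hgif]; group
    have hu'mem : u' ∈ conjSubgroup (reps i) H ⊓ H := by
      refine ⟨(mem_conjSubgroup_iff _ _ _).2 ⟨f * v * f⁻¹, ?_, ?_⟩, hu'H⟩
      · exact H.mul_mem (H.mul_mem hf hv) (H.inv_mem hf)
      · rw [← hkey]; group
    obtain ⟨a, haH, c, hc, hca⟩ := hcond i u' hu'1 hu'mem
    have hc' : c ∈ Subgroup.centralizer {u'} := hc
    have hcu : c * u' = u' * c := ((Subgroup.mem_centralizer_iff.1 hc') u' rfl).symm
    refine ⟨h * a * f, H.mul_mem (H.mul_mem hh haH) hf, ?_⟩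
    have ha : a = c * reps i := hca.symm
    have hau' : a⁻¹ * u' * a = (reps i)⁻¹ * u' * reps i := by
      rw [ha]
      have : u' * c = c * u' := hcu.symm
      calc (c * reps i)⁻¹ * u' * (c * reps i)
          = (reps i)⁻¹ * (c⁻¹ * u' * c) * reps i := by group
        _ = (reps i)⁻¹ * (c⁻¹ * (u' * c)) * reps i := by group
        _ = (reps i)⁻¹ * (c⁻¹ * (c * u')) * reps i := by rw [this]
        _ = (reps i)⁻¹ * u' * reps i := by group
    calc (h * a * f)⁻¹ * u * (h * a * f)
        = f⁻¹ * (a⁻¹ * u' * a) * f := by rw [hu'def]; group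
      _ = f⁻¹ * (f * v * f⁻¹) * f := by rw [hau', hkey]
      _ = v := by group
end

section
/- Let G be a fully residually free group (hence commutative transitive) and let H ≤ G be a subgroup. Suppose 𝒥 is a finite collection of non-trivial abelian subgroups of H such that for every g ∈ G \ H with g⁻¹Hg ∩ H ≠ 1 there exist J ∈ 𝒥 and f ∈ H with g⁻¹Hg ∩ H = f⁻¹Jf. Then H is conjugacy stable in G if and only if for every C, D ∈ 𝒥 and every w ∈ G \ H with w⁻¹Cw = D, the intersection H ∩ C̄w is non-empty, where C̄ denotes the maximal abelian subgroup of G containing C (equivalently, the centralizer in G of any non-trivial element of C). -/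
/-- A group `G` is fully residually free if for every finite set of non-trivial
elements of `G` there is a homomorphism to a free group that does not kill any of them. -/
def FullyResiduallyFree (G : Type*) [Group G] : Prop :=
  ∀ s : Finset G, (∀ g ∈ s, g ≠ 1) →
    ∃ (β : Type) (φ : G →* FreeGroup β), ∀ g ∈ s, φ g ≠ 1

lemma mem_conjSubgroup {G : Type*} [Group G] {g x : G} {K : Subgroup G} :
    x ∈ conjSubgroup g K ↔ g⁻¹ * x * g ∈ K := by
  constructor
  · rintro ⟨y, hy, rfl⟩
    simp only [MulEquiv.coe_toMonoidHom, MulAut.conj_apply]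
    have : g⁻¹ * (g * y * g⁻¹) * g = y := by group
    rw [this]; exact hy
  · intro h
    refine ⟨g⁻¹ * x * g, h, ?_⟩
    simp only [MulEquiv.coe_toMonoidHom, MulAut.conj_apply]
    group

lemma mem_of_eq {G : Type*} [Group G] {K : Subgroup G} {a b : G}
    (h : a ∈ K) (e : a = b) : b ∈ K := e ▸ h

/-- In a commutative transitive group, the maximal abelian subgroup containing a
non-trivial abelian subgroup `C` is the centralizer of any non-trivial element of `C`;
here we express the non-emptiness of `H ∩ C̄w` via centralizers of non-trivial
elements of `C`. -/
theorem limit_group_abelian_intersections_criterion {G : Type*} [Group G]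
    (hG : FullyResiduallyFree G) (H : Subgroup G)
    (𝒥 : Set (Subgroup G)) (hfin : 𝒥.Finite)
    (h𝒥 : ∀ J ∈ 𝒥, J ≠ ⊥ ∧ J ≤ H ∧ ∀ x ∈ J, ∀ y ∈ J, Commute x y)
    (hcover : ∀ g : G, g ∉ H → conjSubgroup g⁻¹ H ⊓ H ≠ ⊥ →
      ∃ J ∈ 𝒥, ∃ f ∈ H, conjSubgroup g⁻¹ H ⊓ H = conjSubgroup f⁻¹ J) :
    ConjugacyStable H ↔
      ∀ C ∈ 𝒥, ∀ D ∈ 𝒥, ∀ w : G, w ∉ H → conjSubgroup w⁻¹ C = D →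
        ∀ u ∈ C, u ≠ 1 →
          ((H : Set G) ∩
            ((fun a => a * w) '' (Subgroup.centralizer {u} : Set G))).Nonempty := by
  constructor
  · -- forward: conjugacy stability gives the intersection condition
    intro hcs C hC D hD w hw hCD u huC hu1
    have huH : u ∈ H := (h𝒥 C hC).2.1 huC
    have hvD : w⁻¹ * u * w ∈ D := by
      rw [← hCD]
      exact mem_conjSubgroup.mpr (mem_of_eq huC (by group))
    have hvH : w⁻¹ * u * w ∈ H := (h𝒥 D hD).2.1 hvD
    obtain ⟨h, hhH, hh⟩ := hcs u (w⁻¹ * u * w) huH hvH ⟨w, rfl⟩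
    refine ⟨h, hhH, h * w⁻¹, ?_, by group⟩
    rw [SetLike.mem_coe, Subgroup.mem_centralizer_iff]
    intro y hy
    rw [Set.mem_singleton_iff] at hy
    rw [hy]
    have hkey : u * h = h * (w⁻¹ * u * w) := by
      rw [← hh]; group
    calc u * (h * w⁻¹) = (u * h) * w⁻¹ := by group
      _ = (h * (w⁻¹ * u * w)) * w⁻¹ := by rw [hkey]
      _ = (h * w⁻¹) * u := by group
  · -- backward: the intersection condition gives conjugacy stability
    intro hyp u v huH hvH ⟨g, hg⟩
    by_cases hu1 : u = 1
    · subst hu1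
      refine ⟨1, one_mem H, ?_⟩
      rw [← hg]; group
    by_cases hgH : g ∈ H
    · exact ⟨g, hgH, hg⟩
    have hv1 : v ≠ 1 := by
      intro h
      apply hu1
      have : u = g * v * g⁻¹ := by rw [← hg]; group
      rw [this, h]; group
    -- v lies in g⁻¹Hg ⊓ H
    have hvInt : v ∈ conjSubgroup g⁻¹ H ⊓ H :=
      Subgroup.mem_inf.mpr
        ⟨mem_conjSubgroup.mpr (mem_of_eq huH (by rw [← hg]; group)), hvH⟩
    have hne1 : conjSubgroup g⁻¹ H ⊓ H ≠ ⊥ := by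
      intro hb
      exact hv1 (Subgroup.mem_bot.mp (hb ▸ hvInt))
    obtain ⟨D, hD, f, hfH, hDeq⟩ := hcover g hgH hne1
    -- u lies in gHg⁻¹ ⊓ H
    have hgiH : g⁻¹ ∉ H := fun h => hgH (by simpa using inv_mem h)
    have huInt : u ∈ conjSubgroup (g⁻¹)⁻¹ H ⊓ H :=
      Subgroup.mem_inf.mpr
        ⟨mem_conjSubgroup.mpr (mem_of_eq hvH (by rw [← hg]; group)), huH⟩
    have hne2 : conjSubgroup (g⁻¹)⁻¹ H ⊓ H ≠ ⊥ := by
      intro hb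
      exact hu1 (Subgroup.mem_bot.mp (hb ▸ huInt))
    obtain ⟨C, hC, e, heH, hCeq⟩ := hcover g⁻¹ hgiH hne2
    set w : G := e * g * f⁻¹ with hw
    have hwH : w ∉ H := by
      intro hmem
      exact hgH (by
        have : g = e⁻¹ * w * f := by rw [hw]; group
        rw [this]
        exact H.mul_mem (H.mul_mem (inv_mem heH) hmem) hfH)
    -- key: w⁻¹ C w = D
    have hCD : conjSubgroup w⁻¹ C = D := by
      ext x
      constructor
      · intro hx
        have hc1 : w * x * w⁻¹ ∈ C := mem_of_eq (mem_conjSubgroup.mp hx) (by group)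
        have hc2 : e⁻¹ * (w * x * w⁻¹) * e ∈ conjSubgroup e⁻¹ C :=
          mem_conjSubgroup.mpr (mem_of_eq hc1 (by group))
        have heq : e⁻¹ * (w * x * w⁻¹) * e = g * (f⁻¹ * x * f) * g⁻¹ := by
          rw [hw]; group
        have hc3 : g * (f⁻¹ * x * f) * g⁻¹ ∈ conjSubgroup (g⁻¹)⁻¹ H ⊓ H := by
          rw [hCeq]; exact heq ▸ hc2
        obtain ⟨hm1, hm2⟩ := Subgroup.mem_inf.mp hc3
        have hH1 : f⁻¹ * x * f ∈ H := mem_of_eq (mem_conjSubgroup.mp hm1) (by group)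
        have hH2 : f⁻¹ * x * f ∈ conjSubgroup g⁻¹ H :=
          mem_conjSubgroup.mpr (mem_of_eq hm2 (by group))
        have hfx : f⁻¹ * x * f ∈ conjSubgroup f⁻¹ D := by
          rw [← hDeq]; exact Subgroup.mem_inf.mpr ⟨hH2, hH1⟩
        exact mem_of_eq (mem_conjSubgroup.mp hfx) (by group)
      · intro hxD
        have hfx : f⁻¹ * x * f ∈ conjSubgroup g⁻¹ H ⊓ H := by
          rw [hDeq]
          exact mem_conjSubgroup.mpr (mem_of_eq hxD (by group))
        obtain ⟨hm1, hm2⟩ := Subgroup.mem_inf.mp hfx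
        have hc3 : g * (f⁻¹ * x * f) * g⁻¹ ∈ conjSubgroup (g⁻¹)⁻¹ H ⊓ H :=
          Subgroup.mem_inf.mpr
            ⟨mem_conjSubgroup.mpr (mem_of_eq hm2 (by group)),
             mem_of_eq (mem_conjSubgroup.mp hm1) (by group)⟩
        rw [hCeq] at hc3
        exact mem_conjSubgroup.mpr
          (mem_of_eq (mem_conjSubgroup.mp hc3) (by rw [hw]; group))
    -- a = e u e⁻¹ ∈ C, nontrivial
    have haC : e * u * e⁻¹ ∈ C := by
      have h0 := huInt
      rw [hCeq] at h0
      exact mem_of_eq (mem_conjSubgroup.mp h0) (by group)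
    have ha1 : e * u * e⁻¹ ≠ 1 := by
      intro h
      apply hu1
      have : u = e⁻¹ * (e * u * e⁻¹) * e := by group
      rw [this, h]; group
    obtain ⟨x, hxH, z, hz, hxz⟩ := hyp C hC D hD w hwH hCD (e * u * e⁻¹) haC ha1
    rw [SetLike.mem_coe, Subgroup.mem_centralizer_iff] at hz
    have hcomm : (e * u * e⁻¹) * z = z * (e * u * e⁻¹) := hz _ (Set.mem_singleton _)
    refine ⟨e⁻¹ * x * f, H.mul_mem (H.mul_mem (inv_mem heH) hxH) hfH, ?_⟩
    have h1 : x⁻¹ * (e * u * e⁻¹) * x = w⁻¹ * (e * u * e⁻¹) * w := by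
      rw [← hxz]
      calc (z * w)⁻¹ * (e * u * e⁻¹) * (z * w)
          = w⁻¹ * (z⁻¹ * ((e * u * e⁻¹) * z)) * w := by group
        _ = w⁻¹ * (z⁻¹ * (z * (e * u * e⁻¹))) * w := by rw [hcomm]
        _ = w⁻¹ * (e * u * e⁻¹) * w := by group
    calc (e⁻¹ * x * f)⁻¹ * u * (e⁻¹ * x * f)
        = f⁻¹ * (x⁻¹ * (e * u * e⁻¹) * x) * f := by group
      _ = f⁻¹ * (w⁻¹ * (e * u * e⁻¹) * w) * f := by rw [h1]
      _ = g⁻¹ * u * g := by rw [hw]; group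
      _ = v := hg
end
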